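/- Let 1 < p < ∞, τ > 0, and let (X, υ) be a compact metric measure space with more than one point satisfying the (p, p)-Poincaré inequality for τ. Then λ_{1,p}(X) ≥ (τ · diam X)^{−p}, where diam X is the diameter of X. -/
import Mathlib


open MeasureTheory Metric Filter Set
open scoped Topology NNReal ENNReal
open Classical

variable {X : Type*} [MetricSpace X]

/-- A real-valued function is Lipschitz (with some constant). -/
def IsLipFun (f : X → ℝ) : Prop := ∃ K : ℝ≥0, LipschitzWith K f

/-- The pointwise Lipschitz constant `Lip f (x)`:
`0` if `x` is isolated, and otherwise the limit (= infimum, by monotonicity)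
as `r → 0` of `sup_{y ∈ B_r(x), y ≠ x} |f x - f y| / dist x y`. -/
noncomputable def pLip (f : X → ℝ) (x : X) : ℝ :=
  if 𝓝[≠] x = ⊥ then 0
  else ⨅ r : Ioi (0:ℝ), sSup ((fun y => |f x - f y| / dist x y) '' (ball x r.1 \ {x}))

/-- `γ` is a (unit-speed) minimal geodesic from `x` to `y`. -/
def IsMinGeodesic (γ : ℝ → X) (x y : X) : Prop :=
  γ 0 = x ∧ γ (dist x y) = y ∧
    ∀ s ∈ Icc (0:ℝ) (dist x y), ∀ t ∈ Icc (0:ℝ) (dist x y), dist (γ s) (γ t) = |s - t|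

/-- A metric space is geodesic if any two points are joined by a minimal geodesic. -/
def IsGeodesicSpace (Y : Type*) [MetricSpace Y] : Prop :=
  ∀ x y : Y, ∃ γ : ℝ → Y, IsMinGeodesic γ x y

section MeasureDefs
variable [MeasurableSpace X] (υ : Measure X)

/-- The doubling condition for `κ`. -/
def DoublingFor (κ : ℝ) : Prop :=
  ∀ x : X, ∀ r : ℝ, 0 < r → υ (ball x (2*r)) ≤ (2:ℝ≥0∞) ^ κ * υ (ball x r)

/-- The `(q,p)`-Poincaré inequality for `τ` (for Lipschitz functions). -/
def PoincareFor (q p τ : ℝ) : Prop :=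
  ∀ x : X, ∀ r : ℝ, 0 < r → ∀ f : X → ℝ, IsLipFun f →
    (⨍ y in ball x r, |f y - ⨍ z in ball x r, f z ∂υ| ^ q ∂υ) ^ (1/q) ≤
      τ * r * ((⨍ y in ball x r, (pLip f y) ^ p ∂υ) ^ (1/p))

/-- `F_g(x,y)`: the infimum over minimal geodesics `γ` from `x` to `y` of
`∫_0^{d(x,y)} g(γ(s)) ds`. -/
noncomputable def segF (g : X → ℝ≥0∞) (x y : X) : ℝ≥0∞ :=
  ⨅ γ ∈ {γ : ℝ → X | IsMinGeodesic γ x y}, ∫⁻ s in Icc (0:ℝ) (dist x y), g (γ s)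

/-- The segment inequality for `lam`. -/
def SegmentIneqFor (lam : ℝ) : Prop :=
  ∀ x : X, ∀ r : ℝ, 0 < r → ∀ g : X → ℝ≥0∞, Measurable g →
    (∫⁻ pr in (ball x r) ×ˢ (ball x r), segF g pr.1 pr.2 ∂(υ.prod υ)) ≤
      ENNReal.ofReal (lam * r) * υ (ball x r) * ∫⁻ z in ball x (3*r), g z ∂υ

/-- The first eigenvalue of the `p`-Laplacian (`∞` if there is no competitor). -/
noncomputable def lambda1 (p : ℝ) : ℝ≥0∞ :=
  ⨅ f ∈ {f : X → ℝ | IsLipFun f ∧ (∫ x, |f x| ^ p ∂υ) = 1 ∧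
      (∫ x, |f x| ^ (p-2) * f x ∂υ) = 0},
    ENNReal.ofReal (∫ x, (pLip f x) ^ p ∂υ)

/-- Minkowski's exterior boundary measure
`υ⁺(A) = liminf_{r → 0+} (υ(B_r(A)) - υ(A))/r`. -/
noncomputable def minkBoundary (A : Set X) : ℝ≥0∞ :=
  Filter.liminf (fun r : ℝ => (υ (thickening r A) - υ A) / ENNReal.ofReal r) (𝓝[>] (0:ℝ))

/-- The Cheeger constant (`∞` if there is no competitor). -/
noncomputable def cheeger : ℝ≥0∞ :=
  ⨅ A ∈ {A : Set X | MeasurableSet A ∧ 0 < υ A ∧ υ A ≤ 1/2}, minkBoundary υ A / υ A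

/-- `λ_{1,p}` for `p ∈ [1, ∞)`, with `λ_{1,1} := h(X)` the Cheeger constant. -/
noncomputable def lam1 (p : ℝ) : ℝ≥0∞ := if p = 1 then cheeger υ else lambda1 υ p

/-- `c_p(f) = inf_{c ∈ ℝ} (∫ |f - c|^p dυ)^{1/p}`. -/
noncomputable def cP (p : ℝ) (f : X → ℝ) : ℝ :=
  ⨅ c : ℝ, (∫ x, |f x - c| ^ p ∂υ) ^ (1/p)

/-- `M` is a median of `f`. -/
def IsMedian (f : X → ℝ) (M : ℝ) : Prop :=
  (1/2 : ℝ≥0∞) ≤ υ {x | M ≤ f x} ∧ (1/2 : ℝ≥0∞) ≤ υ {x | f x ≤ M}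

end MeasureDefs

/-- The global Lipschitz constant `sup_{a ≠ b} |f a - f b| / dist a b`. -/
noncomputable def globalLip (f : X → ℝ) : ℝ :=
  sSup {L : ℝ | ∃ a b : X, a ≠ b ∧ L = |f a - f b| / dist a b}


section AuxStmt15

private lemma abs_rpow_aux {p : ℝ} (hp : 1 < p) {t : ℝ} (ht : 0 ≤ t) :
    |t| ^ (p - 2) * t = t ^ (p - 1) := by
  rcases eq_or_lt_of_le ht with h | h
  · simp [← h, Real.zero_rpow (by linarith : p - 1 ≠ 0)]
  · rw [abs_of_pos h, show p - 1 = (p - 2) + 1 by ring, Real.rpow_add_one (ne_of_gt h)]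

private lemma hasDerivAt_abs_rpow' {p : ℝ} (hp : 1 < p) (a : ℝ) :
    HasDerivAt (fun t : ℝ => |t| ^ p) (p * (|a| ^ (p - 2) * a)) a := by
  simpa [mul_assoc] using hasDerivAt_abs_rpow a hp

private lemma mono_abs_rpow_deriv {p : ℝ} (hp : 1 < p) :
    Monotone (fun a : ℝ => p * (|a| ^ (p - 2) * a)) := by
  have key : Monotone (fun a : ℝ => |a| ^ (p - 2) * a) := by
    intro a b hab
    simp only
    rcases le_or_gt 0 a with ha | ha
    · rw [abs_rpow_aux hp ha, abs_rpow_aux hp (ha.trans hab)]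
      exact Real.rpow_le_rpow ha hab (by linarith)
    · rcases le_or_gt 0 b with hb | hb
      · have h1 : (0 : ℝ) ≤ |a| ^ (p - 2) := Real.rpow_nonneg (abs_nonneg a) _
        have h2 : (0 : ℝ) ≤ |b| ^ (p - 2) * b :=
          mul_nonneg (Real.rpow_nonneg (abs_nonneg b) _) hb
        nlinarith
      · have ha' : |a| ^ (p - 2) * a = -((-a) ^ (p - 1)) := by
          rw [abs_of_neg ha, show p - 1 = (p - 2) + 1 by ring,
            Real.rpow_add_one (by linarith : (-a : ℝ) ≠ 0)]
          ring
        have hb' : |b| ^ (p - 2) * b = -((-b) ^ (p - 1)) := by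
          rw [abs_of_neg hb, show p - 1 = (p - 2) + 1 by ring,
            Real.rpow_add_one (by linarith : (-b : ℝ) ≠ 0)]
          ring
        rw [ha', hb', neg_le_neg_iff]
        exact Real.rpow_le_rpow (by linarith) (by linarith) (by linarith)
  exact key.const_mul (by linarith : (0 : ℝ) ≤ p)

private lemma convexOn_abs_rpow {p : ℝ} (hp : 1 < p) :
    ConvexOn ℝ Set.univ (fun t : ℝ => |t| ^ p) := by
  have hd : ∀ a : ℝ, HasDerivAt (fun t : ℝ => |t| ^ p) (p * (|a| ^ (p - 2) * a)) a :=
    hasDerivAt_abs_rpow' hp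
  have hdiff : Differentiable ℝ (fun t : ℝ => |t| ^ p) := fun a => (hd a).differentiableAt
  have hderiv : deriv (fun t : ℝ => |t| ^ p) = fun a => p * (|a| ^ (p - 2) * a) :=
    funext fun a => (hd a).deriv
  exact Monotone.convexOn_univ_of_deriv hdiff (hderiv ▸ mono_abs_rpow_deriv hp)

private lemma abs_rpow_tangent {p : ℝ} (hp : 1 < p) (a c : ℝ) :
    |a| ^ p - p * c * (|a| ^ (p - 2) * a) ≤ |a - c| ^ p := by
  have hder := hasDerivAt_abs_rpow' hp a
  have hconv := convexOn_abs_rpow hp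
  rcases lt_trichotomy (a - c) a with h | h | h
  · have hc : 0 < c := by linarith
    have hs := hconv.slope_le_of_hasDerivAt (Set.mem_univ (a - c)) (Set.mem_univ a) h hder
    rw [slope_def_field, show a - (a - c) = c from by ring, div_le_iff₀ hc] at hs
    nlinarith
  · have hc : c = 0 := by linarith
    simp [hc]
  · have hc : c < 0 := by linarith
    have hs := hconv.le_slope_of_hasDerivAt (Set.mem_univ a) (Set.mem_univ (a - c)) h hder
    rw [slope_def_field, show a - c - a = -c from by ring,
      le_div_iff₀ (by linarith : (0 : ℝ) < -c)] at hs
    nlinarith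

private lemma measurable_abs_rpow_deriv {p : ℝ} (hp : 1 < p) :
    Measurable (fun a : ℝ => |a| ^ (p - 2) * a) := by
  have h1 : (fun a : ℝ => p * (|a| ^ (p - 2) * a)) = deriv (fun t : ℝ => |t| ^ p) :=
    funext fun a => ((hasDerivAt_abs_rpow' hp a).deriv).symm
  have h2 : Measurable (fun a : ℝ => p * (|a| ^ (p - 2) * a)) := h1 ▸ measurable_deriv _
  have h3 : (fun a : ℝ => |a| ^ (p - 2) * a) =
      fun a : ℝ => p⁻¹ * (p * (|a| ^ (p - 2) * a)) := by
    funext a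
    rw [← mul_assoc, inv_mul_cancel₀ (by linarith : p ≠ 0), one_mul]
  rw [h3]
  exact h2.const_mul _

private lemma pLip_nonneg {X : Type*} [MetricSpace X] (f : X → ℝ) (x : X) :
    0 ≤ pLip f x := by
  rw [pLip]
  split
  · exact le_refl 0
  · haveI : Nonempty (Set.Ioi (0 : ℝ)) := ⟨⟨1, Set.mem_Ioi.2 one_pos⟩⟩
    refine le_ciInf fun r => Real.sSup_nonneg fun t ht => ?_
    obtain ⟨y, _, rfl⟩ := ht
    positivity

end AuxStmt15

/-- lower bound for `λ_{1,p}` from a `(p,p)`-Poincaré inequality. -/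
theorem stmt15 {X : Type*} [MetricSpace X] [CompactSpace X] [MeasurableSpace X] [BorelSpace X]
    (υ : Measure X) [IsProbabilityMeasure υ]
    (p τ : ℝ) (hp : 1 < p) (hτ : 0 < τ) (hnt : ∃ x y : X, x ≠ y)
    (hpoin : PoincareFor υ p p τ) :
    ENNReal.ofReal ((τ * Metric.diam (Set.univ : Set X)) ^ (-p)) ≤ lambda1 υ p := by
    classical
  obtain ⟨x₀, y₀, hxy⟩ := hnt
  set D : ℝ := Metric.diam (Set.univ : Set X) with hD
  have hbdd : Bornology.IsBounded (Set.univ : Set X) := isCompact_univ.isBounded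
  have hDpos : 0 < D := by
    have h1 : dist x₀ y₀ ≤ D := Metric.dist_le_diam_of_mem hbdd (Set.mem_univ _) (Set.mem_univ _)
    have h2 : 0 < dist x₀ y₀ := dist_pos.2 hxy
    linarith
  rw [lambda1]
  refine le_iInf₂ fun f hf => ?_
  simp only [Set.mem_setOf_eq] at hf
  obtain ⟨⟨K, hK⟩, hnorm, hmean⟩ := hf
  have hfc : Continuous f := hK.continuous
  have hfm : Measurable f := hfc.measurable
  obtain ⟨z, _, hz⟩ := isCompact_univ.exists_isMaxOn ⟨x₀, Set.mem_univ _⟩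
    (continuous_abs.comp hfc).continuousOn
  set M : ℝ := |f z| with hM
  have hMb : ∀ x, |f x| ≤ M := fun x => hz (Set.mem_univ x)
  have hM0 : 0 ≤ M := (abs_nonneg _).trans (hMb x₀)
  have int_of_bdd : ∀ (g : X → ℝ) (C : ℝ), Measurable g → (∀ x, |g x| ≤ C) →
      Integrable g υ := fun g C hg hC =>
    (integrable_const C).mono' hg.aestronglyMeasurable
      (Filter.Eventually.of_forall fun x => by simpa using hC x)
  set c : ℝ := ∫ w, f w ∂υ with hc
  have int1 : Integrable (fun x => |f x| ^ p) υ := by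
    refine int_of_bdd _ (M ^ p)
      ((hfc.abs.rpow_const fun x => Or.inr (by linarith)).measurable) fun x => ?_
    rw [abs_of_nonneg (Real.rpow_nonneg (abs_nonneg _) _)]
    exact Real.rpow_le_rpow (abs_nonneg _) (hMb x) (by linarith)
  have int2 : Integrable (fun x => |f x| ^ (p - 2) * f x) υ := by
    refine int_of_bdd _ (M ^ (p - 1)) ((measurable_abs_rpow_deriv hp).comp hfm) fun x => ?_
    have h1 : |(|f x| ^ (p - 2) * f x)| = |f x| ^ (p - 1) := by
      rw [abs_mul, abs_of_nonneg (Real.rpow_nonneg (abs_nonneg _) _)]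
      have h2 := abs_rpow_aux hp (abs_nonneg (f x))
      rwa [abs_abs] at h2
    rw [h1]
    exact Real.rpow_le_rpow (abs_nonneg _) (hMb x) (by linarith)
  have int3 : Integrable (fun x => |f x - c| ^ p) υ := by
    refine int_of_bdd _ ((M + |c|) ^ p)
      (((hfc.sub continuous_const).abs.rpow_const fun x => Or.inr (by linarith)).measurable)
      fun x => ?_
    rw [abs_of_nonneg (Real.rpow_nonneg (abs_nonneg _) _)]
    refine Real.rpow_le_rpow (abs_nonneg _) ?_ (by linarith)
    calc |f x - c| ≤ |f x| + |c| := abs_sub _ _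
      _ ≤ M + |c| := by linarith [hMb x]
  have hone : (1 : ℝ) ≤ ∫ x, |f x - c| ^ p ∂υ := by
    have hpt : (fun x => |f x| ^ p - p * c * (|f x| ^ (p - 2) * f x)) ≤
        fun x => |f x - c| ^ p := fun x => abs_rpow_tangent hp (f x) c
    have hmono := integral_mono (int1.sub ((int2.const_mul (p * c)).congr ?congr)) int3 hpt
    case congr => exact Filter.Eventually.of_forall fun x => rfl
    simp only [Pi.sub_apply] at hmono
    rw [integral_sub int1 ((int2.const_mul (p * c)).congr
      (Filter.Eventually.of_forall fun x => rfl))] at hmono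
    have hsplit : ∫ x, p * c * (|f x| ^ (p - 2) * f x) ∂υ = 0 := by
      rw [integral_const_mul, hmean, mul_zero]
    rw [hsplit, sub_zero, hnorm] at hmono
    exact hmono
  set A : ℝ := ∫ x, (pLip f x) ^ p ∂υ with hA
  have hA0 : 0 ≤ A := integral_nonneg fun x => Real.rpow_nonneg (pLip_nonneg f x) p
  have key : ∀ r : ℝ, D < r → (1 : ℝ) ≤ (τ * r) ^ p * A := by
    intro r hr
    have hrpos : 0 < r := hDpos.trans hr
    have hball : Metric.ball x₀ r = Set.univ := by
      ext y
      simp only [Metric.mem_ball, Set.mem_univ, iff_true]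
      exact lt_of_le_of_lt
        (Metric.dist_le_diam_of_mem hbdd (Set.mem_univ _) (Set.mem_univ _)) hr
    have hp' := hpoin x₀ r hrpos f ⟨K, hK⟩
    rw [hball] at hp'
    simp only [Measure.restrict_univ, average_eq_integral] at hp'
    rw [← hc, ← hA] at hp'
    have h1 : (1 : ℝ) ≤ (∫ y, |f y - c| ^ p ∂υ) ^ (1 / p) :=
      Real.one_le_rpow hone (by positivity)
    have h2 : (1 : ℝ) ≤ τ * r * A ^ (1 / p) := h1.trans hp'
    have h3 : (1 : ℝ) ≤ (τ * r * A ^ (1 / p)) ^ p := by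
      calc (1 : ℝ) = 1 ^ p := (Real.one_rpow p).symm
        _ ≤ _ := Real.rpow_le_rpow zero_le_one h2 (by linarith)
    have h4 : (τ * r * A ^ (1 / p)) ^ p = (τ * r) ^ p * A := by
      rw [Real.mul_rpow (by positivity) (Real.rpow_nonneg hA0 _), ← Real.rpow_mul hA0,
        one_div, inv_mul_cancel₀ (by linarith : p ≠ 0), Real.rpow_one]
    rw [h4] at h3
    exact h3
  have hlim : (1 : ℝ) ≤ (τ * D) ^ p * A := by
    have hcont : ContinuousAt (fun r : ℝ => (τ * r) ^ p * A) D := by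
      have h1 : ContinuousAt (fun r : ℝ => τ * r) D :=
        (continuous_const.mul continuous_id).continuousAt
      have h2 : ContinuousAt (fun u : ℝ => u ^ p) (τ * D) :=
        Real.continuousAt_rpow_const _ _ (Or.inl (by positivity))
      exact (h2.comp h1).mul continuousAt_const
    have hto : Filter.Tendsto (fun r : ℝ => (τ * r) ^ p * A) (nhdsWithin D (Set.Ioi D))
        (nhds ((τ * D) ^ p * A)) := hcont.tendsto.mono_left nhdsWithin_le_nhds
    exact ge_of_tendsto hto (eventually_nhdsWithin_of_forall fun r hr => key r hr)
  refine ENNReal.ofReal_le_ofReal ?_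
  have hτD : (0 : ℝ) < τ * D := by positivity
  have hB : (0 : ℝ) < (τ * D) ^ p := Real.rpow_pos_of_pos hτD p
  have hfin : ((τ * D) ^ p)⁻¹ ≤ A := by
    have h5 : (1 : ℝ) / (τ * D) ^ p ≤ A :=
      (div_le_iff₀ hB).2 (by rw [mul_comm]; exact hlim)
    simpa [one_div] using h5
  rw [Real.rpow_neg hτD.le]
  exact hfin
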